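/- Let M₁,...,M_m be symmetric t×t matrices over F_q with M_i M_j = 0 for all i,j. Then the set of row spaces of the matrices N_X = [X | α I_t], where X ranges over nonzero elements of the matrix algebra generated by M₁,...,M_m and α over F_q \ {0}, is an LCD subspace code in F_q^{2t}: for any two such matrices N, N', the row space of N intersects the dual of the row space of N' trivially. -/

import Mathlib

open Matrix

/-- The Euclidean dual of a linear code `C ⊆ F^ι`:
all vectors orthogonal (w.r.t. the standard bilinear form) to every codeword. -/
def dualCode (F : Type*) [Field F] {ι : Type*} [Fintype ι]
    (C : Submodule F (ι → F)) : Submodule F (ι → F) where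
  carrier := {v | ∀ c ∈ C, v ⬝ᵥ c = 0}
  add_mem' := by
    intro a b ha hb c hc
    simp [add_dotProduct, ha c hc, hb c hc]
  zero_mem' := by intro c hc; simp
  smul_mem' := by
    intro r a ha c hc
    simp [smul_dotProduct, ha c hc]

/-- The row space of a matrix: the span of its rows. -/
def rowSpace (F : Type*) [Field F] {κ ι : Type*} (G : Matrix κ ι F) :
    Submodule F (ι → F) := Submodule.span F (Set.range fun k => G k)

lemma vecMul_smul_one {F : Type*} [Field F] {t : ℕ} (α : F) (u : Fin t → F) :
    u ᵥ* (α • (1 : Matrix (Fin t) (Fin t) F)) = α • u := by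
  ext j
  simp [Matrix.vecMul, dotProduct, Matrix.one_apply, mul_comm]

lemma span_mul_zero {F : Type*} [Field F] {t m : ℕ}
    (M : Fin m → Matrix (Fin t) (Fin t) F)
    (hM : ∀ i j, M i * M j = 0)
    {A B : Matrix (Fin t) (Fin t) F}
    (hA : A ∈ Submodule.span F (Set.range M))
    (hB : B ∈ Submodule.span F (Set.range M)) : A * B = 0 := by
  induction hA using Submodule.span_induction with
  | mem x hx =>
    induction hB using Submodule.span_induction with
    | mem y hy =>
      obtain ⟨i, rfl⟩ := hx; obtain ⟨j, rfl⟩ := hy; exact hM i j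
    | zero => simp
    | add y z _ _ hy hz => rw [Matrix.mul_add, hy, hz, add_zero]
    | smul r y _ hy => rw [Matrix.mul_smul, hy, smul_zero]
  | zero => simp
  | add x y _ _ hx hy => rw [Matrix.add_mul, hx, hy, add_zero]
  | smul r x _ hx => rw [Matrix.smul_mul, hx, smul_zero]

lemma adjoin_prop {F : Type*} [Field F] {t m : ℕ}
    (M : Fin m → Matrix (Fin t) (Fin t) F)
    (hsymm : ∀ i, (M i)ᵀ = M i)
    (hM : ∀ i j, M i * M j = 0)
    {A : Matrix (Fin t) (Fin t) F}
    (hA : A ∈ NonUnitalAlgebra.adjoin F (Set.range M)) :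
    Aᵀ = A ∧ A ∈ Submodule.span F (Set.range M) := by
  induction hA using NonUnitalAlgebra.adjoin_induction with
  | mem x hx =>
    obtain ⟨i, rfl⟩ := hx
    exact ⟨hsymm i, Submodule.subset_span ⟨i, rfl⟩⟩
  | zero => simp
  | add x y _ _ hx hy =>
    exact ⟨by rw [Matrix.transpose_add, hx.1, hy.1], add_mem hx.2 hy.2⟩
  | mul x y _ _ hx hy =>
    rw [span_mul_zero M hM hx.2 hy.2]
    simp
  | smul r x _ hx =>
    exact ⟨by rw [Matrix.transpose_smul, hx.1], Submodule.smul_mem _ _ hx.2⟩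

/-- For symmetric `M_i` with `M_i M_j = 0`, the row spaces of the
matrices `[X | α I]`, `X` nonzero in the algebra generated by the `M_i` and
`α ≠ 0`, form an LCD subspace code in `F_q^{2t}`. -/
theorem stmt7 (F : Type*) [Field F] [Fintype F] {t m : ℕ}
    (M : Fin m → Matrix (Fin t) (Fin t) F)
    (hsymm : ∀ i, (M i)ᵀ = M i)
    (hM : ∀ i j, M i * M j = 0)
    (X Y : Matrix (Fin t) (Fin t) F)
    (hX : X ∈ NonUnitalAlgebra.adjoin F (Set.range M)) (hX0 : X ≠ 0)
    (hY : Y ∈ NonUnitalAlgebra.adjoin F (Set.range M)) (hY0 : Y ≠ 0)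
    (α α' : F) (hα : α ≠ 0) (hα' : α' ≠ 0) :
    rowSpace F (fromCols X (α • (1 : Matrix (Fin t) (Fin t) F))) ⊓
      dualCode F (rowSpace F (fromCols Y (α' • (1 : Matrix (Fin t) (Fin t) F)))) = ⊥ := by
  obtain ⟨hXsymm, hXspan⟩ := adjoin_prop M hsymm hM hX
  obtain ⟨hYsymm, hYspan⟩ := adjoin_prop M hsymm hM hY
  have hXY : X * Y = 0 := span_mul_zero M hM hXspan hYspan
  rw [eq_bot_iff]
  intro v ⟨hv1, hv2⟩
  rw [Submodule.mem_bot]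
  -- v is in the row space of [X | αI]
  have hv1' : v ∈ LinearMap.range (fromCols X (α • (1 : Matrix (Fin t) (Fin t) F))).vecMulLinear := by
    rwa [range_vecMulLinear]
  obtain ⟨u, rfl⟩ := hv1'
  have hvecu : (fromCols X (α • (1 : Matrix (Fin t) (Fin t) F))).vecMulLinear u
      = Sum.elim (u ᵥ* X) (α • u) := by
    rw [Matrix.vecMulLinear_apply, Matrix.vecMul_fromCols, vecMul_smul_one]
  -- the dual condition against each row combination of [Y | α'I]
  have key : ∀ w : Fin t → F, u ⬝ᵥ w = 0 := by
    intro w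
    have hw : (fromCols Y (α' • (1 : Matrix (Fin t) (Fin t) F))).vecMulLinear w
        ∈ rowSpace F (fromCols Y (α' • (1 : Matrix (Fin t) (Fin t) F))) := by
      have := range_vecMulLinear (fromCols Y (α' • (1 : Matrix (Fin t) (Fin t) F)))
      rw [rowSpace]
      exact this ▸ ⟨w, rfl⟩
    have := hv2 _ hw
    rw [hvecu, Matrix.vecMulLinear_apply, Matrix.vecMul_fromCols] at this
    rw [vecMul_smul_one, sumElim_dotProduct_sumElim] at this
    have h1 : (u ᵥ* X) ⬝ᵥ (w ᵥ* Y) = 0 := by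
      rw [← hYsymm, Matrix.vecMul_transpose, dotProduct_mulVec,
        Matrix.vecMul_vecMul, hXY, Matrix.vecMul_zero, zero_dotProduct]
    rw [h1, zero_add, smul_dotProduct, dotProduct_smul] at this
    have := mul_eq_zero.mp this
    rcases this with h | h
    · exact absurd h hα
    · rcases mul_eq_zero.mp h with h' | h'
      · exact absurd h' hα'
      · exact h'
  have hu : u = 0 := by
    funext i
    have := key (Pi.single i 1)
    simpa [dotProduct_single] using this
  rw [hvecu, hu]
  simp
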